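/- Let a_1,…,a_N ∈ R^n be unit ℓ2-norm vectors with μ = max_{i≠j}|⟨a_i,a_j⟩|, let x ∈ R^N be supported on Λ ⊆ {1,…,N} with entries bounded in magnitude by |x_max|, such that |{j ∈ Λ : ⟨a_k, a_j⟩ ≠ 0}| ≤ S for the fixed index k ∉ Λ, and let v ∈ R^n satisfy |⟨a_k, v⟩| ≤ ζ. Let ε_1,…,ε_N be i.i.d. uniform on {−1,+1} and set y = Σ_{j∈Λ} ε_j x_j a_j + v. Then for every p > 0, P( |⟨ε_k a_k, y⟩| > p ) ≤ 2 exp( −p² / (2 ( Σ_{j∈Λ} x_j² ⟨a_k, a_j⟩² + ζ² )) ) ≤ 2 exp( −p² / (2 (|x_max|² S μ² + ζ²)) ). -/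

import Mathlib

open MeasureTheory ProbabilityTheory Real
open scoped ENNReal

lemma rademacher_ae_pm {Ω : Type*} [MeasurableSpace Ω] (P : Measure Ω)
    [IsProbabilityMeasure P] (Z : Ω → ℝ) (hZ : Measurable Z)
    (h1 : P {ω | Z ω = 1} = 1 / 2) (h2 : P {ω | Z ω = -1} = 1 / 2) :
    ∀ᵐ ω ∂P, Z ω = 1 ∨ Z ω = -1 := by
  have hA : MeasurableSet {ω | Z ω = 1} := hZ (measurableSet_singleton 1)
  have hB : MeasurableSet {ω | Z ω = -1} := hZ (measurableSet_singleton (-1))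
  have hdisj : Disjoint {ω | Z ω = 1} {ω | Z ω = -1} := by
    rw [Set.disjoint_left]
    intro ω hω1 hω2
    simp only [Set.mem_setOf_eq] at hω1 hω2
    rw [hω1] at hω2; norm_num at hω2
  have hU : P ({ω | Z ω = 1} ∪ {ω | Z ω = -1}) = 1 := by
    rw [measure_union hdisj hB, h1, h2, ENNReal.add_halves]
  rw [ae_iff]
  have hset : {ω | ¬(Z ω = 1 ∨ Z ω = -1)} = ({ω | Z ω = 1} ∪ {ω | Z ω = -1})ᶜ := by
    ext ω; simp [not_or]
  rw [hset, measure_compl (hA.union hB) (measure_ne_top _ _), hU, measure_univ, tsub_self]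

lemma rademacher_integral_comp {Ω : Type*} [MeasurableSpace Ω] (P : Measure Ω)
    [IsProbabilityMeasure P] (Z : Ω → ℝ) (hZ : Measurable Z)
    (h1 : P {ω | Z ω = 1} = 1 / 2) (h2 : P {ω | Z ω = -1} = 1 / 2)
    (f : ℝ → ℝ) : ∫ ω, f (Z ω) ∂P = (f 1 + f (-1)) / 2 := by
  have hA : MeasurableSet {ω | Z ω = 1} := hZ (measurableSet_singleton 1)
  have hB : MeasurableSet {ω | Z ω = -1} := hZ (measurableSet_singleton (-1))
  have hae := rademacher_ae_pm P Z hZ h1 h2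
  have heq : (fun ω => f (Z ω)) =ᵐ[P]
      ({ω | Z ω = 1}.indicator (fun _ => f 1) + {ω | Z ω = -1}.indicator (fun _ => f (-1))) := by
    filter_upwards [hae] with ω hω
    rcases hω with h | h
    · have hω1 : ω ∈ {ω | Z ω = 1} := h
      have hω2 : ω ∉ {ω | Z ω = -1} := by
        simp only [Set.mem_setOf_eq, h]; norm_num
      simp [Set.indicator_of_mem hω1, Set.indicator_of_notMem hω2, h]
    · have hω1 : ω ∉ {ω | Z ω = 1} := by
        simp only [Set.mem_setOf_eq, h]; norm_num
      have hω2 : ω ∈ {ω | Z ω = -1} := h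
      simp [Set.indicator_of_mem hω2, Set.indicator_of_notMem hω1, h]
  rw [integral_congr_ae heq]
  simp only [Pi.add_apply]
  rw [integral_add ((integrable_const _).indicator hA)
    ((integrable_const _).indicator hB), integral_indicator_const _ hA,
    integral_indicator_const _ hB, measureReal_def, measureReal_def, h1, h2]
  have : ((1 : ℝ≥0∞) / 2).toReal = 1 / 2 := by
    rw [ENNReal.toReal_div]; norm_num
  rw [this]; simp only [smul_eq_mul]; ring

/-- Rademacher concentration for a single off-support correlation:
for `k ∉ Λ` and `y = Σ_{j∈Λ} ε_j x_j a_j + v`, the probability that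
`|⟨ε_k a_k, y⟩| > p` is at most
`2 exp(−p²/(2(Σ_{j∈Λ} x_j² ⟨a_k,a_j⟩² + ζ²)))`, and also at most
`2 exp(−p²/(2(|x_max|² S μ² + ζ²)))`. -/
theorem off_support_correlation_single
    {Ω : Type*} [MeasurableSpace Ω] (P : Measure Ω) [IsProbabilityMeasure P]
    (n N : ℕ)
    -- unit ℓ2-norm vectors `a_1, …, a_N ∈ ℝ^n`
    (a : Fin N → Fin n → ℝ)
    (ha : ∀ j, ∑ t, a j t ^ 2 = 1)
    -- mutual coherence `μ`
    (μ : ℝ) (hμ0 : 0 ≤ μ)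
    (hμ : ∀ i j, i ≠ j → |∑ t, a i t * a j t| ≤ μ)
    -- `x` supported on `Λ`, entries bounded in magnitude by `x_max`
    (Λ : Finset (Fin N)) (x : Fin N → ℝ)
    (hsupp : ∀ i, x i ≠ 0 → i ∈ Λ)
    (xmax : ℝ) (hxmax : ∀ i, |x i| ≤ xmax)
    -- the fixed off-support index `k`
    (k : Fin N) (hk : k ∉ Λ)
    -- overlap bound at `k`
    (S : ℕ)
    (hS : Set.ncard {j | j ∈ Λ ∧ (∑ t, a k t * a j t) ≠ 0} ≤ S)
    -- noise
    (v : Fin n → ℝ) (ζ : ℝ) (hv : |∑ t, a k t * v t| ≤ ζ)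
    -- i.i.d. Rademacher signs
    (ε : Fin N → Ω → ℝ)
    (hmeas : ∀ i, Measurable (ε i))
    (hindep : iIndepFun ε P)
    (hdist : ∀ i, P {ω | ε i ω = 1} = 1 / 2 ∧ P {ω | ε i ω = -1} = 1 / 2)
    (p : ℝ) (hp : 0 < p) :
    P {ω | p < |ε k ω * ∑ t, a k t * ((∑ j ∈ Λ, ε j ω * x j * a j t) + v t)|} ≤
        ENNReal.ofReal (2 * Real.exp (-(p ^ 2) /
          (2 * ((∑ j ∈ Λ, x j ^ 2 * (∑ t, a k t * a j t) ^ 2) + ζ ^ 2)))) ∧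
      P {ω | p < |ε k ω * ∑ t, a k t * ((∑ j ∈ Λ, ε j ω * x j * a j t) + v t)|} ≤
        ENNReal.ofReal (2 * Real.exp (-(p ^ 2) /
          (2 * (xmax ^ 2 * S * μ ^ 2 + ζ ^ 2)))) := by
  classical
  set c : ℝ := ∑ t, a k t * v t with hc
  set α : Fin N → ℝ := fun j => x j * ∑ t, a k t * a j t with hα
  set W : Ω → ℝ := fun ω => ∑ j ∈ Λ, ε j ω * α j with hW
  set T : Ω → ℝ := fun ω => ε k ω * (W ω + c) with hT
  have hWmeas : Measurable W := Finset.measurable_sum _ fun j _ => (hmeas j).mul_const _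
  have hTmeas : Measurable T := (hmeas k).mul (hWmeas.add_const c)
  -- rewrite the inner product
  have hinner : ∀ ω, ∑ t, a k t * ((∑ j ∈ Λ, ε j ω * x j * a j t) + v t) = W ω + c := by
    intro ω
    simp only [mul_add, Finset.sum_add_distrib, ← hc]
    congr 1
    calc ∑ t, a k t * ∑ j ∈ Λ, ε j ω * x j * a j t
        = ∑ t, ∑ j ∈ Λ, a k t * (ε j ω * x j * a j t) := by
          simp [Finset.mul_sum]
      _ = ∑ j ∈ Λ, ∑ t, a k t * (ε j ω * x j * a j t) := Finset.sum_comm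
      _ = W ω := by
          rw [hW]
          refine Finset.sum_congr rfl fun j _ => ?_
          simp only [hα]
          rw [Finset.mul_sum, Finset.mul_sum]
          exact Finset.sum_congr rfl fun t _ => by ring
  have hevent : {ω | p < |ε k ω * ∑ t, a k t * ((∑ j ∈ Λ, ε j ω * x j * a j t) + v t)|}
      = {ω | p < |T ω|} := by
    ext ω
    simp only [Set.mem_setOf_eq, hinner ω, hT]
  -- a.e. the signs are ±1
  have haepm : ∀ᵐ ω ∂P, ∀ i, ε i ω = 1 ∨ ε i ω = -1 := by
    rw [ae_all_iff]
    exact fun i => rademacher_ae_pm P (ε i) (hmeas i) (hdist i).1 (hdist i).2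
  have hWabs : ∀ᵐ ω ∂P, |W ω| ≤ ∑ j ∈ Λ, |α j| := by
    filter_upwards [haepm] with ω hω
    refine (Finset.abs_sum_le_sum_abs _ _).trans ?_
    refine Finset.sum_le_sum fun j _ => ?_
    rw [abs_mul]
    rcases hω j with h | h <;> simp [h]
  have hTabs : ∀ᵐ ω ∂P, |T ω| ≤ (∑ j ∈ Λ, |α j|) + |c| := by
    filter_upwards [hWabs, haepm] with ω h2 hω
    have h1 : |ε k ω| = 1 := by rcases hω k with h | h <;> simp [h]
    calc |T ω| = |ε k ω| * |W ω + c| := by rw [hT]; exact abs_mul _ _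
      _ = |W ω + c| := by rw [h1, one_mul]
      _ ≤ |W ω| + |c| := abs_add_le _ _
      _ ≤ (∑ j ∈ Λ, |α j|) + |c| := add_le_add_left h2 _
  -- integrability of exponentials
  have hintaux : ∀ (Z : Ω → ℝ) (R : ℝ), Measurable Z → (∀ᵐ ω ∂P, |Z ω| ≤ R) →
      ∀ t : ℝ, Integrable (fun ω => Real.exp (t * Z ω)) P := by
    intro Z R hZ hR t
    refine ⟨((hZ.const_mul t).exp).aestronglyMeasurable,
      HasFiniteIntegral.of_bounded (C := Real.exp (|t| * R)) ?_⟩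
    filter_upwards [hR] with ω hω
    rw [Real.norm_eq_abs, abs_of_pos (Real.exp_pos _)]
    refine Real.exp_le_exp.2 ((le_abs_self _).trans ?_)
    rw [abs_mul]
    exact mul_le_mul_of_nonneg_left hω (abs_nonneg t)
  have hWint : ∀ t : ℝ, Integrable (fun ω => Real.exp (t * W ω)) P :=
    hintaux W _ hWmeas hWabs
  have hTint : ∀ t : ℝ, Integrable (fun ω => Real.exp (t * T ω)) P :=
    hintaux T _ hTmeas hTabs
  -- independence of ε k and the Λ-tuple
  have hindKW : IndepFun (ε k) (fun ω (j : Λ) => ε (j : Fin N) ω) P := by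
    have hd : Disjoint ({k} : Finset (Fin N)) Λ := Finset.disjoint_singleton_left.mpr hk
    have h := hindep.indepFun_finset {k} Λ hd hmeas
    exact h.comp (measurable_pi_apply
      (⟨k, Finset.mem_singleton_self k⟩ : ({k} : Finset (Fin N)))) measurable_id
  have key : ∀ (s : Set ℝ), MeasurableSet s → ∀ (e d : ℝ),
      IndepFun ((ε k ⁻¹' s).indicator (1 : Ω → ℝ))
        (fun ω => Real.exp (e) * Real.exp (d * W ω)) P := by
    intro s hs e d
    have h1 : ((ε k ⁻¹' s).indicator (1 : Ω → ℝ)) = (s.indicator (1 : ℝ → ℝ)) ∘ (ε k) := by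
      funext ω
      simp [Set.indicator, Set.mem_preimage]
    have h2 : (fun ω => Real.exp (e) * Real.exp (d * W ω)) =
        (fun z : {j // j ∈ Λ} → ℝ =>
          Real.exp (e) * Real.exp (d * ∑ j ∈ Λ.attach, z j * α (j : Fin N))) ∘
          (fun ω (j : Λ) => ε (j : Fin N) ω) := by
      funext ω
      simp only [Function.comp_apply, hW]
      rw [Finset.sum_attach Λ (fun j => ε j ω * α j)]
    have hψ : Measurable (fun z : {j // j ∈ Λ} → ℝ =>
        Real.exp (e) * Real.exp (d * ∑ j ∈ Λ.attach, z j * α (j : Fin N))) := by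
      have : Measurable (fun z : {j // j ∈ Λ} → ℝ => ∑ j ∈ Λ.attach, z j * α (j : Fin N)) :=
        Finset.measurable_sum _ fun j _ => (measurable_pi_apply j).mul_const _
      exact ((this.const_mul d).exp).const_mul _
    rw [h1, h2]
    exact hindKW.comp (measurable_const.indicator hs) hψ
  -- iid transformed family and per-term mgf
  have hXind : iIndepFun (fun j ω => ε j ω * α j) P :=
    hindep.comp (fun j y => y * α j) (fun j => measurable_id.mul_const _)
  have hXmeas : ∀ j, Measurable (fun ω => ε j ω * α j) := fun j => (hmeas j).mul_const _
  have hmgfX : ∀ (t : ℝ) (j : Fin N), mgf (fun ω => ε j ω * α j) P t = Real.cosh (t * α j) := by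
    intro t j
    have h : ∫ ω, Real.exp (t * (ε j ω * α j)) ∂P
        = (Real.exp (t * (1 * α j)) + Real.exp (t * (-1 * α j))) / 2 :=
      rademacher_integral_comp P (ε j) (hmeas j) (hdist j).1 (hdist j).2
        (fun z => Real.exp (t * (z * α j)))
    have e1 : t * (1 * α j) = t * α j := by ring
    have e2 : t * (-1 * α j) = -(t * α j) := by ring
    rw [e1, e2] at h
    calc mgf (fun ω => ε j ω * α j) P t
        = ∫ ω, Real.exp (t * (ε j ω * α j)) ∂P := rfl
      _ = (Real.exp (t * α j) + Real.exp (-(t * α j))) / 2 := h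
      _ = Real.cosh (t * α j) := (Real.cosh_eq _).symm
  have hmgfW : ∀ t : ℝ, mgf W P t = ∏ j ∈ Λ, Real.cosh (t * α j) := by
    intro t
    have hWsum : W = ∑ j ∈ Λ, (fun ω => ε j ω * α j) := by
      funext ω; rw [hW]; simp [Finset.sum_apply]
    rw [hWsum, iIndepFun.mgf_sum hXind hXmeas]
    exact Finset.prod_congr rfl fun j _ => hmgfX t j
  -- mgf of T
  have hI : ∀ (s : Set ℝ), MeasurableSet s → ∀ (e d : ℝ),
      ∫ ω, (ε k ⁻¹' s).indicator (1 : Ω → ℝ) ω * (Real.exp e * Real.exp (d * W ω)) ∂P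
        = (P (ε k ⁻¹' s)).toReal * (Real.exp e * mgf W P d) := by
    intro s hs e d
    have hind := key s hs e d
    have hm := hind.integral_mul_eq_mul_integral ((measurable_const.indicator (hmeas k hs)).aestronglyMeasurable)
      ((((hWmeas.const_mul d).exp).const_mul _).aestronglyMeasurable)
    calc ∫ ω, (ε k ⁻¹' s).indicator (1 : Ω → ℝ) ω * (Real.exp e * Real.exp (d * W ω)) ∂P
        = ∫ ω, ((ε k ⁻¹' s).indicator (1 : Ω → ℝ) * fun ω => Real.exp e * Real.exp (d * W ω)) ω ∂P := rfl
      _ = (∫ ω, (ε k ⁻¹' s).indicator (1 : Ω → ℝ) ω ∂P) * ∫ ω, Real.exp e * Real.exp (d * W ω) ∂P := hm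
      _ = (P (ε k ⁻¹' s)).toReal * (Real.exp e * mgf W P d) := by
          rw [MeasureTheory.integral_indicator_one (hmeas k hs), MeasureTheory.integral_const_mul]
          rfl
  have hmgfT : ∀ t : ℝ, mgf T P t = Real.cosh (t * c) * ∏ j ∈ Λ, Real.cosh (t * α j) := by
    intro t
    have hA : MeasurableSet (ε k ⁻¹' {1}) := hmeas k (measurableSet_singleton 1)
    have hB : MeasurableSet (ε k ⁻¹' {-1}) := hmeas k (measurableSet_singleton (-1))
    have heq : (fun ω => Real.exp (t * T ω)) =ᵐ[P]
        (fun ω => (ε k ⁻¹' {1}).indicator (1 : Ω → ℝ) ω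
            * (Real.exp (t * c) * Real.exp (t * W ω))
          + (ε k ⁻¹' {-1}).indicator (1 : Ω → ℝ) ω
            * (Real.exp (-(t * c)) * Real.exp (-t * W ω))) := by
      filter_upwards [haepm] with ω hω
      rcases hω k with h | h
      · have hm1 : ω ∈ ε k ⁻¹' {1} := by simp [h]
        have hm2 : ω ∉ ε k ⁻¹' {-1} := by
          simp only [Set.mem_preimage, Set.mem_singleton_iff, h]
          norm_num
        rw [Set.indicator_of_mem hm1, Set.indicator_of_notMem hm2, Pi.one_apply, hT]
        simp only [h, one_mul, zero_mul, add_zero]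
        rw [← Real.exp_add]
        congr 1; ring
      · have hm1 : ω ∉ ε k ⁻¹' {1} := by
          simp only [Set.mem_preimage, Set.mem_singleton_iff, h]
          norm_num
        have hm2 : ω ∈ ε k ⁻¹' {-1} := by simp [h]
        rw [Set.indicator_of_mem hm2, Set.indicator_of_notMem hm1, Pi.one_apply, hT]
        simp only [h, one_mul, zero_mul, zero_add]
        rw [← Real.exp_add]
        congr 1; ring
    have hint1 : Integrable (fun ω => (ε k ⁻¹' {1}).indicator (1 : Ω → ℝ) ω
        * (Real.exp (t * c) * Real.exp (t * W ω))) P :=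
      (key {1} (measurableSet_singleton 1) (t * c) t).integrable_mul
        ((integrable_const (1 : ℝ)).indicator hA) ((hWint t).const_mul _)
    have hint2 : Integrable (fun ω => (ε k ⁻¹' {-1}).indicator (1 : Ω → ℝ) ω
        * (Real.exp (-(t * c)) * Real.exp (-t * W ω))) P :=
      (key {-1} (measurableSet_singleton (-1)) (-(t * c)) (-t)).integrable_mul
        ((integrable_const (1 : ℝ)).indicator hB) ((hWint (-t)).const_mul _)
    have hp1 : P (ε k ⁻¹' {1}) = 1 / 2 := (hdist k).1
    have hp2 : P (ε k ⁻¹' {-1}) = 1 / 2 := (hdist k).2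
    have htR : ((1 : ℝ≥0∞) / 2).toReal = 1 / 2 := by rw [ENNReal.toReal_div]; norm_num
    calc mgf T P t = ∫ ω, Real.exp (t * T ω) ∂P := rfl
      _ = ∫ ω, ((ε k ⁻¹' {1}).indicator (1 : Ω → ℝ) ω
            * (Real.exp (t * c) * Real.exp (t * W ω))
          + (ε k ⁻¹' {-1}).indicator (1 : Ω → ℝ) ω
            * (Real.exp (-(t * c)) * Real.exp (-t * W ω))) ∂P := integral_congr_ae heq
      _ = (P (ε k ⁻¹' {1})).toReal * (Real.exp (t * c) * mgf W P t)
          + (P (ε k ⁻¹' {-1})).toReal * (Real.exp (-(t * c)) * mgf W P (-t)) := by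
          rw [integral_add hint1 hint2, hI {1} (measurableSet_singleton 1) (t * c) t,
            hI {-1} (measurableSet_singleton (-1)) (-(t * c)) (-t)]
      _ = Real.cosh (t * c) * ∏ j ∈ Λ, Real.cosh (t * α j) := by
          rw [hp1, hp2, htR, hmgfW t, hmgfW (-t)]
          have hprodneg : ∏ j ∈ Λ, Real.cosh (-t * α j) = ∏ j ∈ Λ, Real.cosh (t * α j) :=
            Finset.prod_congr rfl fun j _ => by rw [neg_mul, Real.cosh_neg]
          rw [hprodneg, Real.cosh_eq]
          ring
  -- variance proxy
  set D : ℝ := (∑ j ∈ Λ, x j ^ 2 * (∑ t, a k t * a j t) ^ 2) + ζ ^ 2 with hD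
  have hDα : D = (∑ j ∈ Λ, α j ^ 2) + ζ ^ 2 := by
    rw [hD]
    congr 1
    refine Finset.sum_congr rfl fun j _ => ?_
    simp only [hα]
    rw [mul_pow]
  have hζ0 : 0 ≤ ζ := (abs_nonneg _).trans hv
  have hc2 : c ^ 2 ≤ ζ ^ 2 := by
    rw [← sq_abs c]; exact pow_le_pow_left₀ (abs_nonneg c) hv 2
  have hmgfTle : ∀ t : ℝ, mgf T P t ≤ Real.exp (t ^ 2 * D / 2) := by
    intro t
    rw [hmgfT t, hDα]
    have h1 : Real.cosh (t * c) ≤ Real.exp (t ^ 2 * ζ ^ 2 / 2) := by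
      refine (Real.cosh_le_exp_half_sq _).trans (Real.exp_le_exp.2 ?_)
      rw [mul_pow]
      have : t ^ 2 * c ^ 2 ≤ t ^ 2 * ζ ^ 2 := mul_le_mul_of_nonneg_left hc2 (sq_nonneg t)
      linarith
    have h2 : ∏ j ∈ Λ, Real.cosh (t * α j) ≤ Real.exp (∑ j ∈ Λ, t ^ 2 * α j ^ 2 / 2) := by
      rw [Real.exp_sum]
      refine Finset.prod_le_prod (fun j _ => (Real.cosh_pos _).le) fun j _ => ?_
      refine (Real.cosh_le_exp_half_sq _).trans (Real.exp_le_exp.2 (le_of_eq ?_))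
      rw [mul_pow]
    calc Real.cosh (t * c) * ∏ j ∈ Λ, Real.cosh (t * α j)
        ≤ Real.exp (t ^ 2 * ζ ^ 2 / 2) * Real.exp (∑ j ∈ Λ, t ^ 2 * α j ^ 2 / 2) :=
          mul_le_mul h1 h2 (Finset.prod_nonneg fun j _ => (Real.cosh_pos _).le)
            (Real.exp_pos _).le
      _ = Real.exp (t ^ 2 * ζ ^ 2 / 2 + ∑ j ∈ Λ, t ^ 2 * α j ^ 2 / 2) := (Real.exp_add _ _).symm
      _ = Real.exp (t ^ 2 * ((∑ j ∈ Λ, α j ^ 2) + ζ ^ 2) / 2) := by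
          congr 1
          rw [← Finset.sum_div, ← Finset.mul_sum]
          ring
  have hD0 : 0 ≤ D := by
    rw [hDα]
    have : 0 ≤ ∑ j ∈ Λ, α j ^ 2 := Finset.sum_nonneg fun j _ => sq_nonneg _
    nlinarith [sq_nonneg ζ]
  rcases eq_or_lt_of_le hD0 with hD0' | hDpos
  · -- degenerate case : D = 0
    have hsz : 0 ≤ ∑ j ∈ Λ, α j ^ 2 := Finset.sum_nonneg fun j _ => sq_nonneg _
    have hzz : (0:ℝ) ≤ ζ ^ 2 := sq_nonneg ζ
    have hzero : (∑ j ∈ Λ, α j ^ 2) + ζ ^ 2 = 0 := by rw [← hDα, ← hD0']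
    have hsum0 : ∑ j ∈ Λ, α j ^ 2 = 0 := by linarith
    have hζ2 : ζ ^ 2 = 0 := by linarith
    have hζz : ζ = 0 := by nlinarith
    have hcz : c = 0 := by
      have : |c| ≤ 0 := hζz ▸ hv
      exact abs_nonpos_iff.1 this
    have hαz : ∀ j ∈ Λ, α j = 0 := by
      intro j hj
      have h := (Finset.sum_eq_zero_iff_of_nonneg fun j _ => sq_nonneg (α j)).1 hsum0 j hj
      exact (pow_eq_zero_iff two_ne_zero).1 h
    have hTzero : ∀ ω, T ω = 0 := by
      intro ω
      rw [hT]
      simp only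
      rw [hW]
      simp only
      rw [Finset.sum_eq_zero fun j hj => by rw [hαz j hj, mul_zero], hcz]
      ring
    have hempty : {ω | p < |T ω|} = ∅ := by
      ext ω
      simp only [Set.mem_setOf_eq, hTzero ω, abs_zero, Set.mem_empty_iff_false, iff_false]
      exact not_lt.2 hp.le
    constructor <;> (rw [hevent, hempty, measure_empty]; exact zero_le)
  · -- main case : 0 < D
    set r : ℝ := Real.exp (-(p ^ 2) / (2 * D)) with hr
    have hr0 : 0 ≤ r := by rw [hr]; exact (Real.exp_pos _).le
    have hlampos : 0 ≤ p / D := (div_pos hp hDpos).le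
    have hexp : Real.exp (-(p / D) * p) * Real.exp ((p / D) ^ 2 * D / 2) = r := by
      rw [hr, ← Real.exp_add]
      congr 1
      field_simp
      ring
    have hup : P {ω | p ≤ T ω} ≤ ENNReal.ofReal r := by
      rw [← ENNReal.ofReal_toReal (measure_ne_top P _)]
      refine ENNReal.ofReal_le_ofReal ?_
      refine (measure_ge_le_exp_mul_mgf p hlampos (hTint _)).trans ?_
      rw [← hexp]
      exact mul_le_mul_of_nonneg_left (hmgfTle _) (Real.exp_pos _).le
    have hdown : P {ω | T ω ≤ -p} ≤ ENNReal.ofReal r := by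
      rw [← ENNReal.ofReal_toReal (measure_ne_top P _)]
      refine ENNReal.ofReal_le_ofReal ?_
      have h := measure_le_le_exp_mul_mgf (X := T) (μ := P) (t := -(p / D)) (-p)
        (neg_nonpos.2 hlampos) (hTint _)
      refine h.trans ?_
      have he : -(-(p / D)) * -p = -(p / D) * p := by ring
      rw [he, ← hexp]
      have h2 : mgf T P (-(p / D)) ≤ Real.exp ((p / D) ^ 2 * D / 2) := by
        have := hmgfTle (-(p / D))
        rwa [neg_sq] at this
      exact mul_le_mul_of_nonneg_left h2 (Real.exp_pos _).le
    have hsub : {ω | p < |T ω|} ⊆ {ω | p ≤ T ω} ∪ {ω | T ω ≤ -p} := by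
      intro ω hω
      have hω' : p < |T ω| := hω
      rcases lt_abs.1 hω' with h | h
      · exact Or.inl h.le
      · exact Or.inr (by simp only [Set.mem_setOf_eq]; linarith)
    have hmain : P {ω | p < |T ω|} ≤ ENNReal.ofReal (2 * r) := by
      refine (measure_mono hsub).trans ((measure_union_le _ _).trans ?_)
      refine (add_le_add hup hdown).trans (le_of_eq ?_)
      rw [← ENNReal.ofReal_add hr0 hr0]
      congr 1
      ring
    constructor
    · rw [hevent]
      exact hmain
    · rw [hevent]
      refine hmain.trans (ENNReal.ofReal_le_ofReal ?_)
      have hxm0 : 0 ≤ xmax := (abs_nonneg _).trans (hxmax k)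
      have hsum_le : (∑ j ∈ Λ, x j ^ 2 * (∑ t, a k t * a j t) ^ 2)
          ≤ xmax ^ 2 * S * μ ^ 2 := by
        set F := Λ.filter (fun j => (∑ t, a k t * a j t) ≠ 0) with hF
        have hcard : F.card ≤ S := by
          have hset : {j | j ∈ Λ ∧ (∑ t, a k t * a j t) ≠ 0} = ↑F := by
            ext j; simp [hF, Finset.mem_filter]
          rw [hset, Set.ncard_coe_finset] at hS
          exact hS
        have hterm : ∀ j ∈ F, x j ^ 2 * (∑ t, a k t * a j t) ^ 2 ≤ xmax ^ 2 * μ ^ 2 := by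
          intro j hj
          have hjΛ : j ∈ Λ := (Finset.mem_filter.1 hj).1
          have hkj : k ≠ j := fun h => hk (h ▸ hjΛ)
          have h1 : x j ^ 2 ≤ xmax ^ 2 := by
            rw [← sq_abs (x j)]; exact pow_le_pow_left₀ (abs_nonneg _) (hxmax j) 2
          have h2 : (∑ t, a k t * a j t) ^ 2 ≤ μ ^ 2 := by
            rw [← sq_abs]; exact pow_le_pow_left₀ (abs_nonneg _) (hμ k j hkj) 2
          exact mul_le_mul h1 h2 (sq_nonneg _) (by positivity)
        calc (∑ j ∈ Λ, x j ^ 2 * (∑ t, a k t * a j t) ^ 2)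
            = ∑ j ∈ F, x j ^ 2 * (∑ t, a k t * a j t) ^ 2 := by
              rw [hF]
              refine (Finset.sum_filter_of_ne fun j hj hfj => ?_).symm
              intro hs0
              exact hfj (by rw [hs0]; ring)
          _ ≤ ∑ j ∈ F, xmax ^ 2 * μ ^ 2 := Finset.sum_le_sum hterm
          _ = F.card * (xmax ^ 2 * μ ^ 2) := by rw [Finset.sum_const, nsmul_eq_mul]
          _ ≤ S * (xmax ^ 2 * μ ^ 2) := by
              refine mul_le_mul_of_nonneg_right ?_ (by positivity)
              exact_mod_cast hcard
          _ = xmax ^ 2 * S * μ ^ 2 := by ring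
      have hDle : D ≤ xmax ^ 2 * S * μ ^ 2 + ζ ^ 2 := by
        rw [hD]
        exact add_le_add_left hsum_le _
      rw [hr]
      refine mul_le_mul_of_nonneg_left (Real.exp_le_exp.2 ?_) (by norm_num)
      rw [neg_div, neg_div, neg_le_neg_iff]
      have h2D : (0:ℝ) < 2 * D := by linarith
      gcongr
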